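/- arXiv:0811.2668 — 2 statements merged into one kernel-verified Lean document; each statement's English description precedes it below -/
import Mathlib

section
/- Let $(L,[p])$ be a non-abelian restricted Lie algebra over a field of characteristic $p>0$ which is simple as a restricted Lie algebra. Then the derived subalgebra $[L,L]$ is a simple Lie algebra (in the ordinary, non-restricted, sense). -/
/-- The universal Lie polynomial `sᵢ(x₀, x₁)` appearing in Jacobson's formula:
`sᵢ(x₀,x₁) = -(1/i) ∑ᵤ ad x_{u(1)} ∘ ⋯ ∘ ad x_{u(p-1)} (x₁)`, the sum running over all maps
`u : {1,…,p-1} → {0,1}` taking the value `0` exactly `i` times. -/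
noncomputable def jacobsonS (k L : Type*) [Field k] [LieRing L] [LieAlgebra k L]
    (p i : ℕ) (x₀ x₁ : L) : L :=
  -((i : k)⁻¹) • ∑ u ∈ Finset.univ.filter
      (fun u : Fin (p - 1) → Bool => (Finset.univ.filter (fun j => u j = false)).card = i),
    ((List.ofFn fun j : Fin (p - 1) => LieAlgebra.ad k L (if u j then x₁ else x₀)).prod) x₁

/-- `P : L → L` is a `p`-map, making `(L, P)` a restricted Lie algebra: `ad (P x) = (ad x)^p`,
`P (c • x) = c^p • P x`, and Jacobson's additivity formula holds. -/
noncomputable def IsPMap (k L : Type*) [Field k] [LieRing L] [LieAlgebra k L]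
    (p : ℕ) (P : L → L) : Prop :=
  (∀ x, LieAlgebra.ad k L (P x) = (LieAlgebra.ad k L x) ^ p) ∧
  (∀ (c : k) (x : L), P (c • x) = c ^ p • P x) ∧
  (∀ x y : L, P (x + y) = P x + P y + ∑ i ∈ Finset.Icc 1 (p - 1), jacobsonS k L p i x y)



open LieAlgebra

section aux
variable {k : Type*} [Field k] {L : Type*} [LieRing L] [LieAlgebra k L]

lemma auxRS_ad_pow_mem_of_mem (S : LieIdeal k L) {y : L} (hy : y ∈ S) (w : L) (m : ℕ) :
    ((ad k L w) ^ m) y ∈ S := by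
  induction m with
  | zero => simpa using hy
  | succ n ih =>
    rw [pow_succ', Module.End.mul_apply, ad_apply]
    exact S.lie_mem ih

lemma auxRS_ad_pow_mem (S : LieIdeal k L) {z : L} (hz : z ∈ S) (x : L) {m : ℕ} (hm : 1 ≤ m) :
    ((ad k L z) ^ m) x ∈ S := by
  obtain ⟨n, rfl⟩ : ∃ n, m = n + 1 := ⟨m - 1, (Nat.succ_pred_eq_of_pos hm).symm⟩
  rw [pow_succ, Module.End.mul_apply, ad_apply]
  exact auxRS_ad_pow_mem_of_mem S (lie_mem_left k L S z x hz) z n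

lemma auxRS_pow_stab {S : Submodule k L} {z : L} (hst : ∀ s ∈ S, ⁅z, s⁆ ∈ S) {y : L}
    (hy : y ∈ S) (m : ℕ) : ((ad k L z) ^ m) y ∈ S := by
  induction m with
  | zero => simpa using hy
  | succ n ih =>
    rw [pow_succ', Module.End.mul_apply, ad_apply]
    exact hst _ ih

lemma auxRS_ad_pow_eq_zero {z x : L} (h : ⁅z, x⁆ = 0) {m : ℕ} (hm : 1 ≤ m) :
    ((ad k L z) ^ m) x = 0 := by
  obtain ⟨n, rfl⟩ : ∃ n, m = n + 1 := ⟨m - 1, (Nat.succ_pred_eq_of_pos hm).symm⟩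
  rw [pow_succ, Module.End.mul_apply, ad_apply, h, map_zero]

lemma auxRS_prod_ad_mem (S : LieIdeal k L) :
    ∀ l : List (Module.End k L), (∀ e ∈ l, ∃ w, e = ad k L w) → ∀ y ∈ S, l.prod y ∈ S
  | [], _, y, hy => by simpa using hy
  | (a :: t), h, y, hy => by
    rw [List.prod_cons, Module.End.mul_apply]
    obtain ⟨w, rfl⟩ := h a List.mem_cons_self
    rw [ad_apply]
    exact S.lie_mem (auxRS_prod_ad_mem S t (fun e he => h e (List.mem_cons_of_mem _ he)) y hy)

lemma auxRS_jacobsonS_mem (S : LieIdeal k L) (p i : ℕ) (x : L) {y : L} (hy : y ∈ S) :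
    jacobsonS k L p i x y ∈ S := by
  unfold jacobsonS
  refine S.smul_mem _ (S.sum_mem fun u _ => ?_)
  refine auxRS_prod_ad_mem S _ (fun e he => ?_) y hy
  obtain ⟨j, rfl⟩ := List.mem_ofFn.mp he
  exact ⟨_, rfl⟩

end aux

open LieAlgebra

/-- If `(L, P)` is a non-abelian restricted Lie algebra over a field of characteristic `p > 0`
which is simple as a restricted Lie algebra, then the derived subalgebra `[L, L]` is a simple
Lie algebra in the ordinary (non-restricted) sense. -/
theorem derived_of_restricted_simple_is_simple
    (k : Type*) [Field k] (p : ℕ) [Fact p.Prime] [CharP k p]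
    (L : Type*) [LieRing L] [LieAlgebra k L]
    (P : L → L) (hP : IsPMap k L p P)
    (hsimple : ∀ I : LieIdeal k L, (∀ x ∈ I, P x ∈ I) → I = ⊥ ∨ I = ⊤)
    (hnonab : ∃ x y : L, ⁅x, y⁆ ≠ 0) :
    LieAlgebra.IsSimple k (⁅(⊤ : LieIdeal k L), (⊤ : LieIdeal k L)⁆ : LieIdeal k L) := by
  classical
  obtain ⟨hP1, hP2, hP3⟩ := hP
  have hp : p.Prime := Fact.out
  have hpe : ∀ n : ℕ, 1 ≤ p ^ (n + 1) := fun n => Nat.one_le_pow _ _ hp.pos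
  set D : LieIdeal k L := ⁅(⊤ : LieIdeal k L), (⊤ : LieIdeal k L)⁆ with hD
  have had : ∀ (z : L) (n : ℕ), ad k L (P^[n] z) = (ad k L z) ^ (p ^ n) := by
    intro z n
    induction n with
    | zero => simp
    | succ n ih =>
      rw [Function.iterate_succ_apply', hP1, ih, ← pow_mul, ← pow_succ]
  have hP0 : P 0 = 0 := by
    have h := hP2 0 0
    rwa [zero_smul, zero_pow hp.ne_zero, zero_smul] at h
  -- the p-closure of D
  set sM : Set L := ↑D ∪ {z | ∃ x ∈ D, ∃ n : ℕ, z = P^[n + 1] x} with hsM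
  set MS : Submodule k L := Submodule.span k sM with hMS
  have hDMS : ∀ z ∈ D, z ∈ MS := fun z hz => Submodule.subset_span (Or.inl hz)
  have hMSlie : ∀ x m : L, m ∈ MS → ⁅x, m⁆ ∈ MS := by
    intro x m hm
    induction hm using Submodule.span_induction with
    | mem z hz =>
      rcases hz with hz | ⟨w, hw, n, rfl⟩
      · exact hDMS _ (D.lie_mem hz)
      · rw [← lie_skew]
        have h1 : ⁅P^[n + 1] w, x⁆ = ((ad k L w) ^ (p ^ (n + 1))) x := by
          rw [← had, ad_apply]
        rw [h1]
        exact neg_mem (hDMS _ (auxRS_ad_pow_mem D hw x (hpe n)))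
    | zero => rw [lie_zero]; exact zero_mem _
    | add a b _ _ iha ihb => rw [lie_add]; exact add_mem iha ihb
    | smul c a _ iha => rw [lie_smul]; exact Submodule.smul_mem _ _ iha
  set M : LieIdeal k L := { MS with lie_mem := fun {x m} hm => hMSlie x m hm } with hMdef
  have hMP : ∀ m ∈ MS, P m ∈ MS := by
    intro m hm
    induction hm using Submodule.span_induction with
    | mem z hz =>
      rcases hz with hz | ⟨w, hw, n, rfl⟩
      · exact Submodule.subset_span (Or.inr ⟨z, hz, 0, by simp⟩)
      · exact Submodule.subset_span
          (Or.inr ⟨w, hw, n + 1, (Function.iterate_succ_apply' P (n + 1) w).symm⟩)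
    | zero => rw [hP0]; exact zero_mem _
    | add a b ha hb iha ihb =>
      rw [hP3 a b]
      exact add_mem (add_mem iha ihb)
        (Submodule.sum_mem _ fun i _ => auxRS_jacobsonS_mem M p i a hb)
    | smul c a ha iha => rw [hP2]; exact Submodule.smul_mem _ _ iha
  have hMtop : ∀ z : L, z ∈ MS := by
    rcases hsimple M hMP with hbot | htop
    · exfalso
      obtain ⟨x, y, hxy⟩ := hnonab
      have hmem : ⁅x, y⁆ ∈ M :=
        hDMS _ (LieSubmodule.lie_mem_lie (LieSubmodule.mem_top x) (LieSubmodule.mem_top y))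
      rw [hbot, LieSubmodule.mem_bot] at hmem
      exact hxy hmem
    · intro z
      have h1 : z ∈ M := by rw [htop]; exact LieSubmodule.mem_top z
      exact h1
  constructor
  · -- every ideal of D is ⊥ or ⊤
    intro J
    by_cases hJbot : J = ⊥
    · exact Or.inl hJbot
    right
    obtain ⟨j0, hj0J, hj0⟩ : ∃ j0 : ↥D, j0 ∈ J ∧ j0 ≠ 0 := by
      by_contra hc
      push_neg at hc
      exact hJbot ((LieSubmodule.eq_bot_iff J).mpr hc)
    set JLS : Submodule k L :=
      Submodule.map D.incl.toLinearMap (LieSubmodule.toSubmodule J) with hJLS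
    have hJLSmem : ∀ z, z ∈ JLS ↔ ∃ a : ↥D, a ∈ J ∧ (a : L) = z := by
      intro z
      rw [hJLS, Submodule.mem_map]
      constructor
      · rintro ⟨a, ha, rfl⟩; exact ⟨a, ha, rfl⟩
      · rintro ⟨a, ha, rfl⟩; exact ⟨a, ha, rfl⟩
    have hstab : ∀ z ∈ D, ∀ s ∈ JLS, ⁅z, s⁆ ∈ JLS := by
      intro z hz s hs
      obtain ⟨a, haJ, rfl⟩ := (hJLSmem s).mp hs
      exact (hJLSmem _).mpr ⟨⁅(⟨z, hz⟩ : ↥D), a⁆, J.lie_mem haJ, rfl⟩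
    have hJLSlie : ∀ x m : L, m ∈ JLS → ⁅x, m⁆ ∈ JLS := by
      intro x m hm
      have hx := hMtop x
      induction hx using Submodule.span_induction with
      | mem w hw =>
        rcases hw with hw | ⟨v, hv, n, rfl⟩
        · exact hstab w hw m hm
        · have h1 : ⁅P^[n + 1] v, m⁆ = ((ad k L v) ^ (p ^ (n + 1))) m := by
            rw [← had, ad_apply]
          rw [h1]
          exact auxRS_pow_stab (fun s hs => hstab v hv s hs) hm _
      | zero => rw [zero_lie]; exact zero_mem _
      | add a b _ _ iha ihb => rw [add_lie]; exact add_mem iha ihb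
      | smul c a _ iha => rw [smul_lie]; exact Submodule.smul_mem _ _ iha
    set JL : LieIdeal k L := { JLS with lie_mem := fun {x m} hm => hJLSlie x m hm } with hJLdef
    set sJp : Set L := ↑JLS ∪ {z | ∃ x ∈ JLS, ∃ n : ℕ, z = P^[n + 1] x} with hsJp
    set JpS : Submodule k L := Submodule.span k sJp with hJpS
    have hbr : ∀ x m : L, m ∈ JpS → ⁅x, m⁆ ∈ JLS := by
      intro x m hm
      induction hm using Submodule.span_induction with
      | mem w hw =>
        rcases hw with hw | ⟨v, hv, n, rfl⟩
        · exact hJLSlie x w hw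
        · rw [← lie_skew]
          have h1 : ⁅P^[n + 1] v, x⁆ = ((ad k L v) ^ (p ^ (n + 1))) x := by
            rw [← had, ad_apply]
          rw [h1]
          exact neg_mem (auxRS_ad_pow_mem JL hv x (hpe n))
      | zero => rw [lie_zero]; exact zero_mem _
      | add a b _ _ iha ihb => rw [lie_add]; exact add_mem iha ihb
      | smul c a _ iha => rw [lie_smul]; exact Submodule.smul_mem _ _ iha
    have hJpSlie : ∀ x m : L, m ∈ JpS → ⁅x, m⁆ ∈ JpS := fun x m hm =>
      Submodule.subset_span (Or.inl (hbr x m hm))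
    set Jp : LieIdeal k L := { JpS with lie_mem := fun {x m} hm => hJpSlie x m hm } with hJpdef
    have hJpP : ∀ m ∈ JpS, P m ∈ JpS := by
      intro m hm
      induction hm using Submodule.span_induction with
      | mem z hz =>
        rcases hz with hz | ⟨w, hw, n, rfl⟩
        · exact Submodule.subset_span (Or.inr ⟨z, hz, 0, by simp⟩)
        · exact Submodule.subset_span
            (Or.inr ⟨w, hw, n + 1, (Function.iterate_succ_apply' P (n + 1) w).symm⟩)
      | zero => rw [hP0]; exact zero_mem _
      | add a b ha hb iha ihb =>
        rw [hP3 a b]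
        exact add_mem (add_mem iha ihb)
          (Submodule.sum_mem _ fun i _ => auxRS_jacobsonS_mem Jp p i a hb)
      | smul c a ha iha => rw [hP2]; exact Submodule.smul_mem _ _ iha
    rcases hsimple Jp hJpP with hbot | htopJ
    · exfalso
      have hmem : (j0 : L) ∈ Jp :=
        Submodule.subset_span (Or.inl ((hJLSmem _).mpr ⟨j0, hj0J, rfl⟩))
      rw [hbot, LieSubmodule.mem_bot] at hmem
      exact hj0 (Subtype.ext hmem)
    · have hallbr : ∀ x y : L, ⁅x, y⁆ ∈ JLS := by
        intro x y
        refine hbr x y ?_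
        have h1 : y ∈ Jp := by rw [htopJ]; exact LieSubmodule.mem_top y
        exact h1
      have hDJL : D ≤ JL := by
        rw [hD, LieSubmodule.lieIdeal_oper_eq_span, LieSubmodule.lieSpan_le]
        rintro m ⟨x, y, rfl⟩
        exact hallbr x y
      rw [eq_top_iff]
      intro a _
      obtain ⟨b, hbJ, hba⟩ := (hJLSmem _).mp (hDJL a.2)
      rwa [show b = a from Subtype.ext hba] at hbJ
  · -- non-abelian
    intro hab
    have habL : ∀ x y : L, x ∈ D → y ∈ D → ⁅x, y⁆ = 0 := by
      intro x y hx hy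
      have h : (⁅(⟨x, hx⟩ : ↥D), (⟨y, hy⟩ : ↥D)⁆ : ↥D) = 0 := trivial_lie_zero _ _ _ _
      have h2 := congrArg (Subtype.val) h
      exact h2
    have hcen : ∀ z ∈ D, ∀ x : L, ⁅z, x⁆ = 0 := by
      intro z hz x
      have hx := hMtop x
      induction hx using Submodule.span_induction with
      | mem w hw =>
        rcases hw with hw | ⟨v, hv, n, rfl⟩
        · exact habL z w hz hw
        · rw [← lie_skew]
          have h1 : ⁅P^[n + 1] v, z⁆ = ((ad k L v) ^ (p ^ (n + 1))) z := by
            rw [← had, ad_apply]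
          rw [h1, auxRS_ad_pow_eq_zero (habL v z hv hz) (hpe n), neg_zero]
      | zero => exact lie_zero z
      | add a b _ _ iha ihb => rw [lie_add, iha, ihb, add_zero]
      | smul c a _ iha => rw [lie_smul, iha, smul_zero]
    obtain ⟨x, y, hxy⟩ := hnonab
    refine hxy ?_
    clear hxy
    have hx := hMtop x
    induction hx using Submodule.span_induction with
    | mem w hw =>
      rcases hw with hw | ⟨v, hv, n, rfl⟩
      · exact hcen w hw y
      · have h1 : ⁅P^[n + 1] v, y⁆ = ((ad k L v) ^ (p ^ (n + 1))) y := by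
          rw [← had, ad_apply]
        rw [h1, auxRS_ad_pow_eq_zero (hcen v hv y) (hpe n)]
    | zero => exact zero_lie y
    | add a b _ _ iha ihb => rw [add_lie, iha, ihb, add_zero]
    | smul c a _ iha => rw [smul_lie, iha, smul_zero]
end

section
/- Let $k$ be a field of characteristic $p > 3$ and let $A = k[X]/(X^p)$ be the truncated polynomial algebra. Then the Witt algebra $W(1) = \mathrm{Der}_k(A)$ is a simple Lie algebra. -/
set_option synthInstance.maxHeartbeats 1000000
set_option maxHeartbeats 1000000
set_option maxHeartbeats 2000000
set_option linter.unusedSectionVars false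

open Polynomial

namespace WittSimpleAux

variable (k : Type*) [Field k] (p : ℕ) [Fact p.Prime] [CharP k p]

abbrev A : Type _ := Polynomial k ⧸ Ideal.span {(X : Polynomial k) ^ p}

noncomputable abbrev mk : Polynomial k →ₐ[k] A k p :=
  Ideal.Quotient.mkₐ k (Ideal.span {(X : Polynomial k) ^ p})

noncomputable def xx : A k p := mk k p X

lemma mk_surj : Function.Surjective (mk k p) :=
  Ideal.Quotient.mkₐ_surjective k _

lemma hd_aux : ∀ q : Polynomial k, mk k p q = 0 → mk k p (derivative' q) = 0 := by
  intro q hq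
  rw [Ideal.Quotient.mkₐ_eq_mk, Ideal.Quotient.eq_zero_iff_mem,
    Ideal.mem_span_singleton] at hq ⊢
  obtain ⟨r, rfl⟩ := hq
  refine ⟨derivative r, ?_⟩
  rw [derivative'_apply, derivative_mul, derivative_X_pow, CharP.cast_eq_zero k p,
    map_zero, zero_mul, zero_mul, zero_add]

noncomputable def del : Derivation k (A k p) (A k p) :=
  Derivation.liftOfSurjective (mk_surj k p) (hd_aux k p)

lemma del_mk (q : Polynomial k) : del k p (mk k p q) = mk k p (derivative q) := by
  simpa [del] using
    Derivation.liftOfSurjective_apply (mk_surj k p) (hd_aux k p) q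

lemma del_x : del k p (xx k p) = 1 := by
  rw [xx, del_mk, derivative_X, map_one]

lemma derivation_ext {D E : Derivation k (A k p) (A k p)}
    (h : D (xx k p) = E (xx k p)) : D = E := by
  refine Derivation.ext_of_adjoin_eq_top (R := k) ({xx k p} : Set (A k p)) ?_
    (Set.eqOn_singleton.2 h)
  have h1 : ({xx k p} : Set (A k p)) = (mk k p) '' {X} := by simp [xx]
  rw [h1, ← AlgHom.map_adjoin, Polynomial.adjoin_X, Algebra.map_top]
  exact (AlgHom.range_eq_top _).mpr (mk_surj k p)

lemma exists_rep (a : A k p) :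
    ∃ q : Polynomial k, mk k p q = a ∧ q.natDegree < p := by
  have hppos : 0 < p := (Fact.out : p.Prime).pos
  obtain ⟨r, hr⟩ := mk_surj k p a
  refine ⟨r %ₘ (X ^ p), ?_, ?_⟩
  · rw [← hr, Ideal.Quotient.mkₐ_eq_mk, Ideal.Quotient.mk_eq_mk_iff_sub_mem,
      modByMonic_eq_sub_mul_div r (X ^ p)]
    rw [sub_sub_cancel_left, Ideal.neg_mem_iff, Ideal.mem_span_singleton]
    exact Dvd.intro _ rfl
  · rcases eq_or_ne (r %ₘ (X ^ p)) 0 with h0 | h0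
    · rw [h0]; simpa using hppos
    · rw [natDegree_lt_iff_degree_lt h0]
      have hdeg := degree_modByMonic_lt r (monic_X_pow p)
      rwa [degree_X_pow] at hdeg

theorem key (hp : 3 < p) :
    LieAlgebra.IsSimple k (Derivation k (A k p) (A k p)) := by
  have hprime : p.Prime := Fact.out
  have hJne : Ideal.span {(X : Polynomial k) ^ p} ≠ ⊤ := by
    rw [Ne, Ideal.span_singleton_eq_top]
    intro h
    have h2 := natDegree_eq_zero_of_isUnit h
    rw [natDegree_X_pow] at h2
    omega
  haveI : Nontrivial (A k p) := Ideal.Quotient.nontrivial_iff.mpr hJne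
  have smul_app : ∀ (b : A k p) (D : Derivation k (A k p) (A k p)) (a : A k p),
      (b • D) a = b * D a := fun b D a => by
    rw [Derivation.smul_apply, smul_eq_mul]
  constructor
  · -- eq_bot_or_eq_top
    intro I
    rcases eq_or_ne I ⊥ with h | h
    · exact Or.inl h
    refine Or.inr ?_
    obtain ⟨D, hDI, hD0⟩ : ∃ D, D ∈ I ∧ D ≠ 0 := by
      by_contra hc
      push_neg at hc
      exact h ((LieSubmodule.eq_bot_iff _).mpr fun m hm => hc m hm)
    have hax : D (xx k p) ≠ 0 := by
      intro h0
      refine hD0 (derivation_ext k p ?_)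
      rw [h0, Derivation.zero_apply]
    obtain ⟨q, hq, hqd⟩ := exists_rep k p (D (xx k p))
    have hqne : q ≠ 0 := by
      rintro rfl
      rw [map_zero] at hq
      exact hax hq.symm
    -- iterated bracketing with del
    have iter : ∀ n : ℕ, ∃ E, E ∈ I ∧ E (xx k p) = mk k p (derivative^[n] q) := by
      intro n
      induction n with
      | zero => exact ⟨D, hDI, by rw [Function.iterate_zero_apply]; exact hq.symm⟩
      | succ n ih =>
        obtain ⟨E, hEI, hEx⟩ := ih
        refine ⟨⁅del k p, E⁆, I.lie_mem hEI, ?_⟩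
        rw [Derivation.commutator_apply, hEx, del_mk, del_x, Derivation.map_one_eq_zero,
          sub_zero, Function.iterate_succ_apply']
    obtain ⟨E, hEI, hEx⟩ := iter q.natDegree
    set c : k := q.natDegree.factorial • q.leadingCoeff with hc
    have hconst : derivative^[q.natDegree] q = C c := by
      have h0 : (derivative^[q.natDegree] q).natDegree ≤ 0 := by
        have := natDegree_iterate_derivative q q.natDegree
        omega
      rw [eq_C_of_natDegree_le_zero h0]
      congr 1
      rw [coeff_iterate_derivative, zero_add, Nat.descFactorial_self, coeff_natDegree]
    have hcne : c ≠ 0 := by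
      have h1 : ((q.natDegree.factorial : ℕ) : k) ≠ 0 := by
        rw [Ne, CharP.cast_eq_zero_iff k p, hprime.dvd_factorial]
        omega
      have h2 : q.leadingCoeff ≠ 0 := leadingCoeff_ne_zero.mpr hqne
      simpa [hc, nsmul_eq_mul] using mul_ne_zero h1 h2
    have hmkC : mk k p (C c) = c • (1 : A k p) := by
      have hCc : (C c : Polynomial k) = c • (1 : Polynomial k) := by
        rw [Polynomial.smul_eq_C_mul, mul_one]
      rw [hCc, map_smul, map_one]
    have hdelI : del k p ∈ I := by
      have hd : del k p = c⁻¹ • E := by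
        apply derivation_ext k p
        rw [del_x, Derivation.smul_apply, hEx, hconst, hmkC, smul_smul,
          inv_mul_cancel₀ hcne, one_smul]
      rw [hd]
      exact I.smul_mem _ hEI
    -- F := x • del ∈ I
    have h2ne : (2 : k) ≠ 0 := by
      have h2' : ((2 : ℕ) : k) ≠ 0 := by
        rw [Ne, CharP.cast_eq_zero_iff k p]
        intro hdvd
        have := Nat.le_of_dvd (by norm_num) hdvd
        omega
      simpa using h2'
    have hGx : (⁅(xx k p * xx k p) • del k p, del k p⁆ :
        Derivation k (A k p) (A k p)) (xx k p)
        = -((2 : k) • xx k p) := by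
      simp only [Derivation.commutator_apply, smul_app, del_x, Derivation.map_one_eq_zero,
        mul_zero, mul_one, zero_sub, Derivation.leibniz, smul_eq_mul]
      rw [two_smul]
    have hFI : (xx k p • del k p) ∈ I := by
      have hF : xx k p • del k p
          = (-(2 : k)⁻¹) • ⁅(xx k p * xx k p) • del k p, del k p⁆ := by
        apply derivation_ext k p
        rw [smul_app, del_x, mul_one, Derivation.smul_apply, hGx, smul_neg, neg_smul,
          neg_neg, smul_smul, inv_mul_cancel₀ h2ne, one_smul]
      rw [hF]
      exact I.smul_mem _ (I.lie_mem hdelI)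
    -- all powers
    have hem : ∀ m : ℕ, m < p → (xx k p ^ m • del k p) ∈ I := by
      intro m hm
      match m, hm with
      | 0, _ => simpa using hdelI
      | 1, _ => simpa using hFI
      | (n+2), hm =>
        have hmne : (1 : k) - ((n+2 : ℕ) : k) ≠ 0 := by
          intro hzero
          have h1 : (((n+1 : ℕ)) : k) = 0 := by
            push_cast at hzero ⊢
            linear_combination -hzero
          rw [CharP.cast_eq_zero_iff k p] at h1
          have := Nat.le_of_dvd (by omega) h1
          omega
        have hHx : (⁅xx k p ^ (n+2) • del k p, xx k p • del k p⁆ :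
            Derivation k (A k p) (A k p)) (xx k p)
            = ((1 : k) - ((n+2 : ℕ) : k)) • xx k p ^ (n+2) := by
          simp only [Derivation.commutator_apply, smul_app, del_x, mul_one,
            Derivation.leibniz_pow, smul_eq_mul, Nat.add_sub_cancel]
          rw [mul_smul_comm, ← pow_succ', sub_smul, one_smul, Nat.cast_smul_eq_nsmul]
          norm_num
        have hkey : xx k p ^ (n+2) • del k p
            = ((1 : k) - ((n+2 : ℕ) : k))⁻¹ •
              ⁅xx k p ^ (n+2) • del k p, xx k p • del k p⁆ := by
          apply derivation_ext k p
          rw [smul_app, del_x, mul_one, Derivation.smul_apply, hHx, smul_smul,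
            inv_mul_cancel₀ hmne, one_smul]
        rw [hkey]
        exact I.smul_mem _ (I.lie_mem hFI)
    -- conclude I = ⊤
    rw [eq_top_iff]
    rintro E -
    obtain ⟨r, hr, hrd⟩ := exists_rep k p (E (xx k p))
    have hsum_apply : ∀ (s : Finset ℕ) (f : ℕ → Derivation k (A k p) (A k p)),
        (∑ j ∈ s, f j) (xx k p) = ∑ j ∈ s, f j (xx k p) := by
      intro s f
      induction s using Finset.cons_induction with
      | empty => simp
      | cons j s hj ih =>
        rw [Finset.sum_cons, Finset.sum_cons, Derivation.add_apply, ih]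
    have mk_C : ∀ a : k, mk k p (C a) = a • (1 : A k p) := by
      intro a
      have hCc : (C a : Polynomial k) = a • (1 : Polynomial k) := by
        rw [Polynomial.smul_eq_C_mul, mul_one]
      rw [hCc, map_smul, map_one]
    have hrsum : mk k p r = ∑ j ∈ Finset.range p, r.coeff j • xx k p ^ j := by
      conv_lhs => rw [as_sum_range' r p hrd]
      rw [map_sum]
      refine Finset.sum_congr rfl fun j _ => ?_
      rw [← C_mul_X_pow_eq_monomial, map_mul, map_pow, mk_C, smul_mul_assoc, one_mul]
      rfl
    have hEeq : E = ∑ j ∈ Finset.range p, r.coeff j • (xx k p ^ j • del k p) := by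
      apply derivation_ext k p
      rw [hsum_apply]
      simp only [Derivation.smul_apply, smul_app, del_x, mul_one]
      rw [← hrsum, hr]
    rw [hEeq]
    have hmem : ∀ s : Finset ℕ, (∀ j ∈ s, j < p) →
        (∑ j ∈ s, r.coeff j • (xx k p ^ j • del k p)) ∈ I := by
      intro s hs
      induction s using Finset.cons_induction with
      | empty => simpa using I.zero_mem
      | cons j s hj ih =>
        rw [Finset.sum_cons]
        exact I.add_mem (I.smul_mem _ (hem j (hs j (Finset.mem_cons_self j s))))
          (ih fun i hi => hs i (Finset.mem_cons_of_mem hi))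
    exact hmem _ fun j hj => Finset.mem_range.mp hj
  · -- non-abelian
    intro habel
    have h1 : (⁅del k p, xx k p • del k p⁆ : Derivation k (A k p) (A k p)) = 0 :=
      trivial_lie_zero _ _ _ _
    have h2 := congrArg (fun D : Derivation k (A k p) (A k p) => D (xx k p)) h1
    simp only [Derivation.commutator_apply, Derivation.smul_apply, del_x, smul_eq_mul,
      mul_one, Derivation.zero_apply, Derivation.map_one_eq_zero, mul_zero, sub_zero] at h2
    exact one_ne_zero h2

end WittSimpleAux

/-- Over a field `k` of characteristic `p > 3`, the Witt algebra
`W(1) = Der_k(k[X]/(X^p))` is a simple Lie algebra. -/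
theorem wittAlgebra_isSimple
    (k : Type*) [Field k] (p : ℕ) [Fact p.Prime] [CharP k p] (hp : 3 < p) :
    LieAlgebra.IsSimple k
      (Derivation k (Polynomial k ⧸ Ideal.span {(Polynomial.X : Polynomial k) ^ p})
        (Polynomial k ⧸ Ideal.span {(Polynomial.X : Polynomial k) ^ p})) :=
  WittSimpleAux.key k p hp
end
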